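/- arXiv:2504.16238 — 4 statements merged into one kernel-verified Lean document; each statement's English description precedes it below -/
import Mathlib

section
/- Let y, f, g, h ∈ ℝⁿ, let La : ℝⁿ → ℝ be any fairness loss function, and let λ ∈ ℝ. Let L(u, v) = Σᵢ (uᵢ − vᵢ)² denote the MSE loss and define the adjuster objective L_O(u) = Σᵢ uᵢ² + λ · La(f + u). Assume (i) equal fairness: La(h) = La(f + g); and (ii) optimality of the adjuster relative to h − f: L_O(g) ≤ L_O(h − f). Then the difference in MSE loss satisfies L(f + g, y) − L(h, y) ≤ 2 Σᵢ (fᵢ − yᵢ)·(gᵢ − (hᵢ − fᵢ)), i.e. L(f + g, y) − L(h, y) ≤ 2 (f − y)ᵀ (g − (h − f)). -/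
/-- The mean squared error loss `L(u, v) = ∑ i, (uᵢ - vᵢ)²`. -/
def mseLoss {n : ℕ} (u v : Fin n → ℝ) : ℝ := ∑ i, (u i - v i) ^ 2

/-- Under (i) equal fairness `La(h) = La(f + g)` and (ii) optimality of the
adjuster relative to `h − f` for the adjuster objective `L_O(u) = ∑ i, uᵢ² + λ·La(f + u)`,
we have `L(f + g, y) − L(h, y) ≤ 2 ∑ i, (fᵢ − yᵢ)·(gᵢ − (hᵢ − fᵢ))`. -/
theorem adjuster_mse_bound {n : ℕ} (y f g h : Fin n → ℝ)
    (La : (Fin n → ℝ) → ℝ) (lam : ℝ)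
    (L_O : (Fin n → ℝ) → ℝ)
    (hLO : ∀ u, L_O u = (∑ i, (u i) ^ 2) + lam * La (f + u))
    (hfair : La h = La (f + g))
    (hopt : L_O g ≤ L_O (h - f)) :
    mseLoss (f + g) y - mseLoss h y
      ≤ 2 * ∑ i, (f i - y i) * (g i - (h i - f i)) := by
  have hfh : f + (h - f) = h := by ext i; simp
  rw [hLO, hLO, hfh, hfair] at hopt
  have hsq : (∑ i, (g i) ^ 2) ≤ ∑ i, ((h - f) i) ^ 2 := by linarith
  have key : mseLoss (f + g) y - mseLoss h y
      = (∑ i, (g i) ^ 2) - (∑ i, ((h - f) i) ^ 2)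
        + 2 * ∑ i, (f i - y i) * (g i - (h i - f i)) := by
    simp only [mseLoss, Finset.mul_sum, ← Finset.sum_sub_distrib, ← Finset.sum_add_distrib]
    apply Finset.sum_congr rfl
    intro i _
    simp only [Pi.add_apply, Pi.sub_apply]
    ring
  rw [key]
  linarith
end

section
/- Let X be an n × d real matrix with XᵀX invertible, y ∈ ℝⁿ, λ ∈ ℝ, and let La : ℝⁿ → ℝ be differentiable with gradient ∇La. Let β_f = (XᵀX)⁻¹ Xᵀ y be the ordinary least squares solution, and suppose β_a ∈ ℝᵈ satisfies the first-order condition of the adversarial debiasing objective: 2 Xᵀ (X β_a − y) + λ Xᵀ ∇La(X β_a) = 0. Then β_g := β_a − β_f satisfies the first-order condition of the adjuster objective: 2 XᵀX β_g + λ Xᵀ ∇La(X β_f + X β_g) = 0. -/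
open Matrix

/-- Let `X` be an `n × d` real matrix with `XᵀX` invertible, `y ∈ ℝⁿ`, `λ ∈ ℝ`,
and let `La : ℝⁿ → ℝ` be differentiable with gradient `∇La` (i.e. the Fréchet derivative of
`La` at `u` is `v ↦ ∑ i, ∇La(u)ᵢ vᵢ`).
Let `β_f = (XᵀX)⁻¹ Xᵀ y` be the OLS solution and suppose `β_a` satisfies the first-order
condition of the adversarial debiasing objective:
`2 Xᵀ (X β_a − y) + λ Xᵀ ∇La(X β_a) = 0`.
Then `β_g := β_a − β_f` satisfies the first-order condition of the adjuster objective: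
`2 XᵀX β_g + λ Xᵀ ∇La(X β_f + X β_g) = 0`. -/
theorem adjuster_first_order_condition {n d : ℕ}
    (X : Matrix (Fin n) (Fin d) ℝ) (y : Fin n → ℝ) (lam : ℝ)
    (La : (Fin n → ℝ) → ℝ) (gradLa : (Fin n → ℝ) → (Fin n → ℝ))
    (hLa : ∀ u : Fin n → ℝ,
      HasFDerivAt La (∑ i, gradLa u i • ContinuousLinearMap.proj (R := ℝ) (φ := fun _ : Fin n => ℝ) i) u)
    (hinv : Invertible (Xᵀ * X))
    (β_f : Fin d → ℝ) (hβf : β_f = (Xᵀ * X)⁻¹ *ᵥ (Xᵀ *ᵥ y))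
    (β_a : Fin d → ℝ)
    (hFOC : (2 : ℝ) • (Xᵀ *ᵥ (X *ᵥ β_a - y)) + lam • (Xᵀ *ᵥ gradLa (X *ᵥ β_a)) = 0) :
    (2 : ℝ) • ((Xᵀ * X) *ᵥ (β_a - β_f))
      + lam • (Xᵀ *ᵥ gradLa (X *ᵥ β_f + X *ᵥ (β_a - β_f))) = 0 := by
  have hXβf : X *ᵥ β_f + X *ᵥ (β_a - β_f) = X *ᵥ β_a := by
    rw [← Matrix.mulVec_add, add_sub_cancel]
  have hnorm : (Xᵀ * X) *ᵥ β_f = Xᵀ *ᵥ y := by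
    rw [hβf, Matrix.mulVec_mulVec, Matrix.mul_nonsing_inv _
      (Matrix.isUnit_iff_isUnit_det _ |>.mp (isUnit_of_invertible _)), Matrix.one_mulVec]
  have key : (Xᵀ * X) *ᵥ (β_a - β_f) = Xᵀ *ᵥ (X *ᵥ β_a - y) := by
    rw [Matrix.mulVec_sub, hnorm, Matrix.mulVec_sub, Matrix.mulVec_mulVec]
  rw [hXβf, key, hFOC]
end

section
/- Let X be an n × d real matrix with XᵀX invertible, y ∈ ℝⁿ, λ ≥ 0, and let La : ℝⁿ → ℝ be convex and differentiable. Define L_AD(β) = ‖Xβ − y‖² + λ·La(Xβ) and, with β_f = (XᵀX)⁻¹Xᵀy and ŷ = Xβ_f, define L_O(β) = ‖Xβ‖² + λ·La(ŷ + Xβ). If β_a is a global minimizer of L_AD, then β_g := β_a − β_f is a global minimizer of L_O; that is, the adjuster solution coincides with the adversarial debiasing solution in the sense that ŷ + X β_g = X β_a. -/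
open Matrix

/-- With `XᵀX` invertible, `λ ≥ 0`, and `La` convex and differentiable, define
`L_AD(β) = ‖Xβ − y‖² + λ·La(Xβ)` and, with `β_f = (XᵀX)⁻¹Xᵀy` and `ŷ = Xβ_f`,
`L_O(β) = ‖Xβ‖² + λ·La(ŷ + Xβ)`.  If `β_a` is a global minimizer of `L_AD`, then
`β_g := β_a − β_f` is a global minimizer of `L_O`, and `ŷ + X β_g = X β_a`. -/
theorem adjuster_coincides_with_AD {n d : ℕ}
    (X : Matrix (Fin n) (Fin d) ℝ) (y : Fin n → ℝ) (lam : ℝ) (hlam : 0 ≤ lam)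
    (La : (Fin n → ℝ) → ℝ)
    (hconv : ConvexOn ℝ Set.univ La)
    (hdiff : Differentiable ℝ La)
    (hinv : Invertible (Xᵀ * X))
    (β_f : Fin d → ℝ) (hβf : β_f = (Xᵀ * X)⁻¹ *ᵥ (Xᵀ *ᵥ y))
    (yhat : Fin n → ℝ) (hyhat : yhat = X *ᵥ β_f)
    (L_AD L_O : (Fin d → ℝ) → ℝ)
    (hLAD : ∀ β, L_AD β = (∑ i, (X *ᵥ β - y) i ^ 2) + lam * La (X *ᵥ β))
    (hLO : ∀ β, L_O β = (∑ i, (X *ᵥ β) i ^ 2) + lam * La (yhat + X *ᵥ β))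
    (β_a : Fin d → ℝ) (hmin : ∀ β, L_AD β_a ≤ L_AD β) :
    (∀ β, L_O (β_a - β_f) ≤ L_O β) ∧ yhat + X *ᵥ (β_a - β_f) = X *ᵥ β_a := by
  have hXty : Xᵀ *ᵥ (yhat - y) = 0 := by
    subst hyhat hβf
    rw [Matrix.mulVec_sub, Matrix.mulVec_mulVec, Matrix.mulVec_mulVec,
      Matrix.mul_inv_of_invertible, Matrix.one_mulVec, sub_self]
  have hcross : ∀ β : Fin d → ℝ, (X *ᵥ β) ⬝ᵥ (yhat - y) = 0 := by
    intro β
    rw [dotProduct_comm, Matrix.dotProduct_mulVec, ← Matrix.mulVec_transpose, hXty]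
    simp
  have hkey : ∀ β : Fin d → ℝ,
      L_AD (β + β_f) = L_O β + ∑ i, (yhat - y) i ^ 2 := by
    intro β
    rw [hLAD, hLO]
    have h1 : X *ᵥ (β + β_f) = X *ᵥ β + yhat := by
      rw [Matrix.mulVec_add, hyhat]
    have h2 : X *ᵥ (β + β_f) - y = X *ᵥ β + (yhat - y) := by
      rw [h1]; abel
    rw [h2, h1]
    have hc := hcross β
    simp only [dotProduct, Pi.sub_apply] at hc
    have hsum : ∑ i, (X *ᵥ β + (yhat - y)) i ^ 2 =
        (∑ i, (X *ᵥ β) i ^ 2) + 2 * (∑ i, (X *ᵥ β) i * (yhat i - y i))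
          + ∑ i, (yhat - y) i ^ 2 := by
      rw [Finset.mul_sum, ← Finset.sum_add_distrib, ← Finset.sum_add_distrib]
      apply Finset.sum_congr rfl
      intro i _
      simp only [Pi.add_apply, Pi.sub_apply]
      ring
    rw [hsum, hc]
    have : yhat + X *ᵥ β = X *ᵥ β + yhat := by abel
    rw [this]
    ring
  constructor
  · intro β
    have h1 := hmin (β + β_f)
    have h2 : β_a = (β_a - β_f) + β_f := by abel
    rw [h2, hkey, hkey] at h1
    linarith
  · rw [Matrix.mulVec_sub, hyhat]; abel
end

section
/- Let σ(z) = 1/(1 + e^{−z}) and BCE(u, w) = −Σᵢ [wᵢ ln σ(uᵢ) + (1 − wᵢ) ln(1 − σ(uᵢ))]. Let f, g, h, y ∈ ℝⁿ and set ŷᵢ = σ(fᵢ). If BCE(f + g, ŷ) ≤ BCE(h, ŷ), then BCE(f + g, y) ≤ BCE(h, y) + Σᵢ (σ(fᵢ) − yᵢ) · (gᵢ − (hᵢ − fᵢ)), i.e. BCE(f + g, y) ≤ BCE(h, y) + (σ(f) − y)ᵀ [g − (h − f)]. -/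
/-- The logistic sigmoid `σ(z) = 1/(1 + e^{-z})`. -/
noncomputable def sigmoid (z : ℝ) : ℝ := 1 / (1 + Real.exp (-z))

/-- The binary cross-entropy of logits `u` against (possibly soft) labels `w`:
`BCE(u, w) = −∑ i, [wᵢ ln σ(uᵢ) + (1 − wᵢ) ln(1 − σ(uᵢ))]`. -/
noncomputable def bce {n : ℕ} (u w : Fin n → ℝ) : ℝ :=
  -∑ i, (w i * Real.log (sigmoid (u i)) + (1 - w i) * Real.log (1 - sigmoid (u i)))

/-- With pseudo-labels `ŷᵢ = σ(fᵢ)`, if `BCE(f + g, ŷ) ≤ BCE(h, ŷ)`, then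
`BCE(f + g, y) ≤ BCE(h, y) + ∑ i, (σ(fᵢ) − yᵢ)·(gᵢ − (hᵢ − fᵢ))`. -/
theorem bce_adjuster_bound {n : ℕ} (f g h y : Fin n → ℝ)
    (yhat : Fin n → ℝ) (hyhat : ∀ i, yhat i = sigmoid (f i))
    (hle : bce (f + g) yhat ≤ bce h yhat) :
    bce (f + g) y ≤ bce h y + ∑ i, (sigmoid (f i) - y i) * (g i - (h i - f i)) := by
  have key : ∀ z : ℝ, Real.log (sigmoid z) - Real.log (1 - sigmoid z) = z := by
    intro z
    have hpos : (0 : ℝ) < 1 + Real.exp (-z) := by positivity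
    have h1 : sigmoid z = 1 / (1 + Real.exp (-z)) := rfl
    have h2 : 1 - sigmoid z = Real.exp (-z) / (1 + Real.exp (-z)) := by
      rw [h1]; field_simp; ring
    rw [h2, h1, Real.log_div one_ne_zero (ne_of_gt hpos),
        Real.log_div (Real.exp_ne_zero _) (ne_of_gt hpos), Real.log_one, Real.log_exp]
    ring
  -- affine shift: bce u y = bce u yhat + ∑ (yhat i - y i) * u i
  have shift : ∀ u : Fin n → ℝ,
      bce u y = bce u yhat + ∑ i, (yhat i - y i) * u i := by
    intro u
    unfold bce
    have : ∀ i : Fin n,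
        y i * Real.log (sigmoid (u i)) + (1 - y i) * Real.log (1 - sigmoid (u i))
        = (yhat i * Real.log (sigmoid (u i)) + (1 - yhat i) * Real.log (1 - sigmoid (u i)))
          - (yhat i - y i) * u i := by
      intro i
      linear_combination (y i - yhat i) * key (u i)
    rw [Finset.sum_congr rfl (fun i _ => this i), Finset.sum_sub_distrib]
    ring
  have hsum : ∑ i, (yhat i - y i) * ((f + g) i - h i)
      = ∑ i, (sigmoid (f i) - y i) * (g i - (h i - f i)) := by
    apply Finset.sum_congr rfl
    intro i _
    rw [hyhat i]
    simp only [Pi.add_apply]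
    ring
  have e1 := shift (f + g)
  have e2 := shift h
  have : ∑ i, (yhat i - y i) * ((f + g) i - h i)
      = (∑ i, (yhat i - y i) * (f + g) i) - ∑ i, (yhat i - y i) * h i := by
    rw [← Finset.sum_sub_distrib]
    apply Finset.sum_congr rfl
    intro i _; ring
  linarith [hsum, this]
end
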